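/- Let t ∈ ℝ, let r, s ∈ ℝ satisfy r + s = 1/2 and r·s = t, let λ ∈ ℂ∖{0}, and let A_t(λ) be the Delaunay residue. For n ∈ ℕ let L_{t,n} be the ℂ-linear endomorphism of the space of traceless 2×2 complex matrices given by L_{t,n}(X) = A_t(λ)·X − X·A_t(λ) + n·X. Then: (i) if n ≥ 2 and |t·λ⁻¹·(λ−1)²| < 1/4, then L_{t,n} is bijective; (ii) if n = 1, t ≠ 0 and λ ≠ 1, then L_{t,1} is bijective. -/

import Mathlib

open Matrix

/-- The Delaunay residue `A_t(λ) = [[0, rλ⁻¹ + s], [rλ + s, 0]]`. -/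
noncomputable def delaunayResidue (r s : ℝ) (lam : ℂ) : Matrix (Fin 2) (Fin 2) ℂ :=
  !![0, (r : ℂ) * lam⁻¹ + (s : ℂ); (r : ℂ) * lam + (s : ℂ), 0]

/-- The Lie algebra `sl₂(ℂ)` of traceless 2×2 complex matrices, as a submodule. -/
noncomputable def sl2C : Submodule ℂ (Matrix (Fin 2) (Fin 2) ℂ) :=
  LinearMap.ker (Matrix.traceLinearMap (Fin 2) ℂ ℂ)

/-- The operator `L_n(X) = [A, X] + n • X` as an endomorphism of `sl₂(ℂ)`. -/
noncomputable def Lop (A : Matrix (Fin 2) (Fin 2) ℂ) (n : ℕ) : sl2C →ₗ[ℂ] sl2C where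
  toFun X := ⟨A * (X : Matrix (Fin 2) (Fin 2) ℂ) - (X : Matrix (Fin 2) (Fin 2) ℂ) * A +
      (n : ℂ) • (X : Matrix (Fin 2) (Fin 2) ℂ), by
    have hX : Matrix.trace (X : Matrix (Fin 2) (Fin 2) ℂ) = 0 := X.2
    simp [sl2C, Matrix.traceLinearMap, Matrix.trace_add, Matrix.trace_sub, Matrix.trace_smul,
      Matrix.trace_mul_comm A, hX]⟩
  map_add' X Y := by
    ext
    simp [Matrix.mul_add, Matrix.add_mul, smul_add]
    abel
  map_smul' c X := by
    ext
    simp [Matrix.mul_smul, Matrix.smul_mul, smul_sub, smul_add, smul_comm c]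
    ring

lemma Lop_bij_of (p q : ℂ) (n : ℕ) (hn : (n : ℂ) ≠ 0) (h : ((n : ℂ))^2 ≠ 4 * (p * q)) :
    Function.Bijective (Lop !![0, p; q, 0] n) := by
  have hinj : Function.Injective (Lop !![0, p; q, 0] n) := by
    rw [← LinearMap.ker_eq_bot, LinearMap.ker_eq_bot']
    intro X hX
    have hM : !![0, p; q, 0] * (X : Matrix (Fin 2) (Fin 2) ℂ) -
        (X : Matrix (Fin 2) (Fin 2) ℂ) * !![0, p; q, 0] +
        (n : ℂ) • (X : Matrix (Fin 2) (Fin 2) ℂ) = 0 := congrArg Subtype.val hX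
    set M := (X : Matrix (Fin 2) (Fin 2) ℂ) with hMdef
    have htr : M 0 0 + M 1 1 = 0 := by
      have h2 : Matrix.traceLinearMap (Fin 2) ℂ ℂ M = 0 := X.2
      simpa [Matrix.traceLinearMap, Matrix.trace_fin_two] using h2
    have h00 := congrFun (congrFun hM 0) 0
    have h01 := congrFun (congrFun hM 0) 1
    have h10 := congrFun (congrFun hM 1) 0
    simp [Matrix.mul_apply, Matrix.vecMul, dotProduct, Fin.sum_univ_two, Matrix.vecHead, Matrix.vecTail] at h00 h01 h10
    have ha : ((n : ℂ)^2 - 4 * (p * q)) * M 0 0 = 0 := by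
      linear_combination (n : ℂ) * h00 + q * h01 - p * h10 - 2 * p * q * htr
    have ha0 : M 0 0 = 0 := by
      rcases mul_eq_zero.mp ha with h' | h'
      · exact absurd (sub_eq_zero.mp h') h
      · exact h'
    have hb0 : M 0 1 = 0 := by
      have hd : M 1 1 = 0 := by linear_combination htr - ha0
      have : (n : ℂ) * M 0 1 = 0 := by linear_combination h01 - p * hd + p * ha0
      exact (mul_eq_zero.mp this).resolve_left hn
    have hc0 : M 1 0 = 0 := by
      have hd : M 1 1 = 0 := by linear_combination htr - ha0
      have : (n : ℂ) * M 1 0 = 0 := by linear_combination h10 - q * ha0 + q * hd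
      exact (mul_eq_zero.mp this).resolve_left hn
    have hd0 : M 1 1 = 0 := by linear_combination htr - ha0
    apply Subtype.ext
    show M = 0
    ext i j
    fin_cases i <;> fin_cases j <;> simpa using ‹_›
  exact ⟨hinj, (LinearMap.injective_iff_surjective).mp hinj⟩

/-- Invertibility of `L_{t,n}` on `sl₂(ℂ)` for the Delaunay residue. -/
theorem Lop_delaunay_bijective (t : ℝ) (r s : ℝ) (hrs : r + s = 1 / 2) (hprod : r * s = t)
    (lam : ℂ) (hlam : lam ≠ 0) (n : ℕ) :
    (2 ≤ n → ‖(t : ℂ) * lam⁻¹ * (lam - 1) ^ 2‖ < 1 / 4 →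
      Function.Bijective (Lop (delaunayResidue r s lam) n)) ∧
    (n = 1 → t ≠ 0 → lam ≠ 1 →
      Function.Bijective (Lop (delaunayResidue r s lam) n)) := by
  set p : ℂ := (r : ℂ) * lam⁻¹ + (s : ℂ) with hp
  set q : ℂ := (r : ℂ) * lam + (s : ℂ) with hq
  have hA : delaunayResidue r s lam = !![0, p; q, 0] := rfl
  have h1 : (r : ℂ) + (s : ℂ) = 1 / 2 := by
    have := congrArg (Complex.ofReal) hrs; push_cast at this; exact this
  have h2 : (r : ℂ) * (s : ℂ) = (t : ℂ) := by
    have := congrArg (Complex.ofReal) hprod; push_cast at this; exact this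
  have hpq : p * q = 1 / 4 + (t : ℂ) * lam⁻¹ * (lam - 1) ^ 2 := by
    have hinv : lam⁻¹ * lam = 1 := inv_mul_cancel₀ hlam
    rw [hp, hq]
    linear_combination (lam ^ 2 * lam⁻¹ - 2 * lam * lam⁻¹ + lam⁻¹) * h2 +
      ((r : ℂ) ^ 2 - (r : ℂ) * (s : ℂ) * lam + 2 * (r : ℂ) * (s : ℂ)) * hinv +
      ((r : ℂ) + (s : ℂ) + 1 / 2) * h1
  constructor
  · intro hn habs
    have hn0 : (n : ℂ) ≠ 0 := by
      exact_mod_cast Nat.cast_ne_zero.mpr (by omega)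
    rw [hA]
    apply Lop_bij_of p q n hn0
    intro heq
    have h4 : ‖4 * (p * q)‖ < 2 := by
      rw [hpq]
      calc ‖4 * (1 / 4 + (t : ℂ) * lam⁻¹ * (lam - 1) ^ 2)‖
          = ‖1 + 4 * ((t : ℂ) * lam⁻¹ * (lam - 1) ^ 2)‖ := by ring_nf
        _ ≤ ‖(1 : ℂ)‖ + ‖4 * ((t : ℂ) * lam⁻¹ * (lam - 1) ^ 2)‖ :=
            norm_add_le _ _
        _ = 1 + 4 * ‖(t : ℂ) * lam⁻¹ * (lam - 1) ^ 2‖ := by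
            rw [norm_mul]; norm_num
        _ < 1 + 4 * (1 / 4) := by linarith
        _ = 2 := by norm_num
    have h5 : ‖(n : ℂ) ^ 2‖ = (n : ℝ) ^ 2 := by
      simp [map_pow]
    have h6 : (4 : ℝ) ≤ (n : ℝ) ^ 2 := by
      have : (2 : ℝ) ≤ (n : ℝ) := by exact_mod_cast hn
      nlinarith
    rw [heq] at h5
    linarith [h4, h6]
  · intro hn ht hlam1
    subst hn
    rw [hA]
    apply Lop_bij_of p q 1 (by norm_num)
    rw [hpq]
    intro heq
    have hw : (t : ℂ) * lam⁻¹ * (lam - 1) ^ 2 ≠ 0 := by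
      apply mul_ne_zero (mul_ne_zero _ (inv_ne_zero hlam))
      · exact pow_ne_zero _ (sub_ne_zero.mpr hlam1)
      · exact_mod_cast ht
    exact hw (by push_cast at heq; linear_combination (-(1 / 4) : ℂ) * heq)
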